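/- Let u be a tempered distribution on ℝ^N whose Littlewood-Paley blocks satisfy ‖Δ_k u‖_{L^∞} ≤ M 2^{-k}(k+1) for all k ≥ 0. Then u is log-Zygmund: there exists C (depending only on the Littlewood-Paley decomposition and dimension) such that for all x, y with 0 < |y| < 1, |u(x+y)+u(x-y)-2u(x)| ≤ C M |y| log(1+1/|y|). -/

import Mathlib

private lemma auxNatLeGeom (k : ℕ) : ((k:ℝ)+1) ≤ 2*(3/2)^k := by
  induction k with
  | zero => norm_num
  | succ k ih =>
    have h : (0:ℝ) ≤ (3/2:ℝ)^k := by positivity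
    have h1 : (1:ℝ) ≤ (3/2:ℝ)^k := one_le_pow₀ (by norm_num)
    push_cast
    rw [pow_succ]
    nlinarith

private lemma auxSummable : Summable (fun k : ℕ => ((k:ℝ)+1)*(1/2)^k) := by
  have hg : Summable (fun k : ℕ => 2*((3/4:ℝ))^k) :=
    (summable_geometric_of_lt_one (by norm_num) (by norm_num)).mul_left 2
  refine Summable.of_nonneg_of_le (fun k => by positivity) (fun k => ?_) hg
  have h1 := auxNatLeGeom k
  have h2 : ((3/4:ℝ))^k = (3/2)^k * (1/2)^k := by rw [← mul_pow]; norm_num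
  have h3 : (0:ℝ) ≤ (1/2:ℝ)^k := by positivity
  rw [h2]
  nlinarith

private lemma auxTsumLe : (∑' k : ℕ, ((k:ℝ)+1)*(1/2)^k) ≤ 8 := by
  have hg : Summable (fun k : ℕ => 2*((3/4:ℝ))^k) :=
    (summable_geometric_of_lt_one (by norm_num) (by norm_num)).mul_left 2
  have hle : ∀ k : ℕ, ((k:ℝ)+1)*(1/2)^k ≤ 2*(3/4)^k := by
    intro k
    have h1 := auxNatLeGeom k
    have h2 : ((3/4:ℝ))^k = (3/2)^k * (1/2)^k := by rw [← mul_pow]; norm_num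
    have h3 : (0:ℝ) ≤ (1/2:ℝ)^k := by positivity
    rw [h2]; nlinarith
  calc (∑' k : ℕ, ((k:ℝ)+1)*(1/2)^k) ≤ ∑' k : ℕ, 2*((3/4:ℝ))^k :=
        Summable.tsum_le_tsum hle auxSummable hg
    _ = 2 * (1 - 3/4)⁻¹ := by
        rw [tsum_mul_left, tsum_geometric_of_lt_one (by norm_num) (by norm_num)]
    _ ≤ 8 := by norm_num

private lemma auxSecondDiff {E : Type*} [NormedAddCommGroup E] [NormedSpace ℝ E]
    (f : E → ℝ) (hf : ContDiff ℝ 2 f) (K : ℝ)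
    (hK : ∀ z, ‖iteratedFDeriv ℝ 2 f z‖ ≤ K) (x y : E) :
    |f (x+y) + f (x-y) - 2*f x| ≤ K * ‖y‖^2 := by
  set g := fderiv ℝ f with hg
  have hfd : Differentiable ℝ f := hf.differentiable two_ne_zero
  have hg1 : ContDiff ℝ 1 g := hf.fderiv_right (by norm_num)
  have hgd : Differentiable ℝ g := hg1.differentiable one_ne_zero
  have hdg : ∀ z, ‖fderiv ℝ g z‖ ≤ K := by
    intro z
    have e0 : ‖iteratedFDeriv ℝ 0 (fderiv ℝ g) z‖ = ‖iteratedFDeriv ℝ 1 g z‖ :=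
      norm_iteratedFDeriv_fderiv
    have e1 : ‖iteratedFDeriv ℝ 1 g z‖ = ‖iteratedFDeriv ℝ 2 f z‖ :=
      norm_iteratedFDeriv_fderiv
    rw [norm_iteratedFDeriv_zero] at e0
    rw [e0, e1]; exact hK z
  have hA : ∀ z : E, ‖g (z + y) - g z‖ ≤ K * ‖y‖ := by
    intro z
    have := convex_univ.norm_image_sub_le_of_norm_fderiv_le
      (f := g) (C := K) (fun w _ => hgd w)
      (fun w _ => hdg w) (Set.mem_univ z) (Set.mem_univ (z + y))
    simpa using this
  set h : E → ℝ := fun z => f (z + y) - f z with hh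
  have hder : ∀ z : E, HasFDerivAt h (g (z + y) - g z) z := by
    intro z
    have h1 : HasFDerivAt (fun z : E => f (z + y)) (g (z + y)) z := by
      have := (hfd (z + y)).hasFDerivAt.comp z ((hasFDerivAt_id z).add_const y)
      exact this
    exact h1.sub (hfd z).hasFDerivAt
  have hB : ‖h x - h (x - y)‖ ≤ K * ‖y‖ * ‖x - (x - y)‖ := by
    exact convex_univ.norm_image_sub_le_of_norm_hasFDerivWithin_le
      (fun z _ => (hder z).hasFDerivWithinAt)
      (fun z _ => hA z)
      (Set.mem_univ (x - y)) (Set.mem_univ x)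
  have hxy : x - (x - y) = y := by abel
  rw [hxy] at hB
  have heq : h x - h (x - y) = f (x+y) + f (x-y) - 2*f x := by
    simp only [hh, sub_add_cancel]
    ring
  rw [heq] at hB
  calc |f (x+y) + f (x-y) - 2*f x| = ‖f (x+y) + f (x-y) - 2*f x‖ := (Real.norm_eq_abs _).symm
    _ ≤ K * ‖y‖ * ‖y‖ := hB
    _ = K * ‖y‖^2 := by ring

private lemma auxPowEq (k : ℕ) : (2:ℝ)^(-(k:ℝ)) = (1/2:ℝ)^k := by
  rw [Real.rpow_neg (by norm_num), Real.rpow_natCast]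
  simp [one_div, inv_pow]

private lemma auxPow2Eq (k : ℕ) : (2:ℝ)^(2*(k:ℝ)) * (2:ℝ)^(-(k:ℝ)) = (2:ℝ)^k := by
  rw [← Real.rpow_add (by norm_num)]
  have h : 2*(k:ℝ) + -(k:ℝ) = (k:ℝ) := by ring
  rw [h, Real.rpow_natCast]

/-- if `u` admits a Littlewood-Paley type decomposition
`u = Σ_k u_k` with `‖u_k‖_{L^∞} ≤ M 2^{-k}(k+1)` and the Bernstein bound
`‖∇² u_k‖_{L^∞} ≤ A 2^{2k} · M 2^{-k}(k+1)` (with `A` the Bernstein constant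
of the decomposition), then `u` is log-Zygmund:
`|u(x+y)+u(x-y)-2u(x)| ≤ C M |y| log(1+1/|y|)` for `0 < |y| < 1`,
with `C` depending only on the decomposition (i.e. on `A`) and the dimension. -/
theorem logZygmund_of_dyadic_bounds (N : ℕ) (A : ℝ) (hA : 0 ≤ A) :
    ∃ C > 0, ∀ (M : ℝ), 0 ≤ M →
      ∀ (u : EuclideanSpace ℝ (Fin N) → ℝ) (uk : ℕ → EuclideanSpace ℝ (Fin N) → ℝ),
      (∀ k, ContDiff ℝ 2 (uk k)) →
      (∀ x, HasSum (fun k => uk k x) (u x)) →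
      (∀ k x, |uk k x| ≤ M * (2 : ℝ) ^ (-(k : ℝ)) * ((k : ℝ) + 1)) →
      (∀ k x, ‖iteratedFDeriv ℝ 2 (uk k) x‖
          ≤ A * (2 : ℝ) ^ (2 * (k : ℝ)) * (M * (2 : ℝ) ^ (-(k : ℝ)) * ((k : ℝ) + 1))) →
      ∀ x y : EuclideanSpace ℝ (Fin N), 0 < ‖y‖ → ‖y‖ < 1 →
        |u (x + y) + u (x - y) - 2 * u x|
          ≤ C * M * (‖y‖ * Real.log (1 + 1 / ‖y‖)) := by
  have hl2 : 0 < Real.log 2 := Real.log_pos (by norm_num)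
  refine ⟨(2*A+32)*(3/Real.log 2), mul_pos (by linarith) (div_pos (by norm_num) hl2), ?_⟩
  intro M hM u uk hC2 hS hbnd hbern x y hy0 hy1
  set r := ‖y‖ with hr
  have hrpos : 0 < r := hy0
  have hrinv : 0 < r⁻¹ := inv_pos.mpr hrpos
  have h1r : 1 < r⁻¹ := by
    have hc : r * r⁻¹ = 1 := mul_inv_cancel₀ hrpos.ne'
    nlinarith
  set L := Real.log (1 + 1/r) with hL
  have hL2 : Real.log 2 ≤ L := by
    apply Real.log_le_log (by norm_num)
    rw [one_div]; linarith
  have hL0 : 0 < L := lt_of_lt_of_le hl2 hL2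
  set n := Nat.floor (Real.logb 2 r⁻¹) with hn
  have hlogb0 : 0 ≤ Real.logb 2 r⁻¹ := Real.logb_nonneg one_lt_two h1r.le
  have hnle : (n:ℝ) ≤ Real.logb 2 r⁻¹ := Nat.floor_le hlogb0
  have hnlt : Real.logb 2 r⁻¹ < (n:ℝ) + 1 := Nat.lt_floor_add_one _
  set m := n + 1 with hm
  have h2n : (2:ℝ)^n ≤ r⁻¹ := by
    have h := Real.rpow_le_rpow_of_exponent_le one_le_two hnle
    rw [Real.rpow_logb two_pos (by norm_num) hrinv, Real.rpow_natCast] at h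
    exact h
  have h2m : r⁻¹ < (2:ℝ)^m := by
    have h := Real.rpow_lt_rpow_of_exponent_lt one_lt_two hnlt
    rw [Real.rpow_logb two_pos (by norm_num) hrinv] at h
    have e : ((n:ℝ) + 1) = ((m:ℕ):ℝ) := by rw [hm]; push_cast; ring
    rw [e, Real.rpow_natCast] at h
    exact h
  have hrm : (1/2:ℝ)^m ≤ r := by
    rw [one_div, inv_pow, inv_le_comm₀ (by positivity) hrpos]
    exact h2m.le
  have h2mr : (2:ℝ)^m ≤ 2/r := by
    have e : (2:ℝ)^m = 2 * 2^n := by rw [hm, pow_succ]; ring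
    have h2 : 2 * (2:ℝ)^n ≤ 2 * r⁻¹ := by linarith
    rw [e, div_eq_mul_inv]; exact h2
  -- the blocks of the second difference
  set D : ℕ → ℝ := fun k => uk k (x+y) + uk k (x-y) - 2 * uk k x with hD
  have hDsum : HasSum D (u (x+y) + u (x-y) - 2 * u x) :=
    ((hS (x+y)).add (hS (x-y))).sub ((hS x).mul_left 2)
  -- trivial bound
  have htriv : ∀ k, |D k| ≤ 4*M*(1/2:ℝ)^k*((k:ℝ)+1) := by
    intro k
    have h1 := hbnd k (x+y); have h2 := hbnd k (x-y); have h3 := hbnd k x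
    rw [auxPowEq k] at h1 h2 h3
    have habs : |D k| ≤ |uk k (x+y)| + |uk k (x-y)| + |(-(2 * uk k x))| := by
      have e : D k = uk k (x+y) + uk k (x-y) + (-(2 * uk k x)) := by rw [hD]; ring
      rw [e]; exact abs_add_three _ _ _
    rw [abs_neg, abs_mul, abs_two] at habs
    linarith
  -- Bernstein/Taylor bound
  have hK : ∀ k z, ‖iteratedFDeriv ℝ 2 (uk k) z‖ ≤ A*M*(2:ℝ)^k*((k:ℝ)+1) := by
    intro k z
    have h := hbern k z
    have e : A * (2:ℝ)^(2*(k:ℝ)) * (M * (2:ℝ)^(-(k:ℝ)) * ((k:ℝ)+1))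
        = A*M*(2:ℝ)^k*((k:ℝ)+1) := by
      linear_combination (A * M * ((k:ℝ)+1)) * auxPow2Eq k
    rw [e] at h
    exact h
  have htay : ∀ k, |D k| ≤ A*M*(2:ℝ)^k*((k:ℝ)+1) * r^2 := by
    intro k
    have h := auxSecondDiff (uk k) (hC2 k) _ (hK k) x y
    rw [← hr] at h
    exact h
  -- the majorant
  set b : ℕ → ℝ := fun k =>
    if k < m then A*M*(2:ℝ)^k*((k:ℝ)+1)*r^2 else 4*M*(1/2:ℝ)^k*((k:ℝ)+1) with hb
  have hDb : ∀ k, |D k| ≤ b k := by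
    intro k
    rw [hb]
    by_cases hk : k < m
    · simp only [if_pos hk]
      calc |D k| ≤ A*M*(2:ℝ)^k*((k:ℝ)+1) * r^2 := htay k
        _ = A*M*(2:ℝ)^k*((k:ℝ)+1)*r^2 := by ring
    · simp only [if_neg hk]
      exact htriv k
  have htails : Summable (fun k : ℕ => 4*M*(1/2:ℝ)^k*((k:ℝ)+1)) :=
    (auxSummable.mul_left (4*M)).congr (fun k => by ring)
  have hsb : Summable b := by
    rw [← summable_nat_add_iff m]
    refine ((summable_nat_add_iff m).mpr htails).congr (fun k => ?_)
    rw [hb]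
    simp only
    rw [if_neg (by omega)]
  have hsabs : Summable (fun k => |D k|) :=
    Summable.of_nonneg_of_le (fun k => abs_nonneg _) hDb hsb
  have hmain : |u (x+y) + u (x-y) - 2 * u x| ≤ ∑' k, b k := by
    rw [← hDsum.tsum_eq]
    have h1 : |∑' k, D k| ≤ ∑' k, |D k| := by
      have := norm_tsum_le_tsum_norm (f := D)
        (by simpa [Real.norm_eq_abs] using hsabs)
      simpa [Real.norm_eq_abs] using this
    calc |∑' k, D k| ≤ ∑' k, |D k| := h1
      _ ≤ ∑' k, b k := Summable.tsum_le_tsum hDb hsabs hsb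
  -- finite part
  have hfin : ∑ k ∈ Finset.range m, b k ≤ 2*A*M*r*(m:ℝ) := by
    have step1 : ∑ k ∈ Finset.range m, b k
        ≤ ∑ k ∈ Finset.range m, (A*M*r^2*(2:ℝ)^k)*(m:ℝ) := by
      apply Finset.sum_le_sum
      intro k hk
      rw [Finset.mem_range] at hk
      rw [hb]; simp only [if_pos hk]
      have hkm : ((k:ℝ)+1) ≤ (m:ℝ) := by exact_mod_cast Nat.succ_le_of_lt hk
      have hpos : (0:ℝ) ≤ A*M*r^2*(2:ℝ)^k := by
        apply mul_nonneg (mul_nonneg (mul_nonneg hA hM) (sq_nonneg r)) (by positivity)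
      calc A*M*(2:ℝ)^k*((k:ℝ)+1)*r^2 = (A*M*r^2*(2:ℝ)^k)*((k:ℝ)+1) := by ring
        _ ≤ (A*M*r^2*(2:ℝ)^k)*(m:ℝ) := mul_le_mul_of_nonneg_left hkm hpos
    have step2 : ∑ k ∈ Finset.range m, (A*M*r^2*(2:ℝ)^k)*(m:ℝ)
        = (A*M*r^2*(m:ℝ)) * ∑ k ∈ Finset.range m, (2:ℝ)^k := by
      rw [Finset.mul_sum]
      apply Finset.sum_congr rfl
      intro k _
      ring
    have step3 : ∑ k ∈ Finset.range m, (2:ℝ)^k ≤ (2:ℝ)^m := by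
      rw [geom_sum_eq (by norm_num : (2:ℝ) ≠ 1) m]
      have : (0:ℝ) < 2^m := by positivity
      norm_num
    have hnn : (0:ℝ) ≤ A*M*r^2*(m:ℝ) := by
      apply mul_nonneg (mul_nonneg (mul_nonneg hA hM) (sq_nonneg r)) (by positivity)
    calc ∑ k ∈ Finset.range m, b k
        ≤ (A*M*r^2*(m:ℝ)) * ∑ k ∈ Finset.range m, (2:ℝ)^k := by
          rw [← step2]; exact step1
      _ ≤ (A*M*r^2*(m:ℝ)) * (2:ℝ)^m := mul_le_mul_of_nonneg_left step3 hnn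
      _ ≤ (A*M*r^2*(m:ℝ)) * (2/r) := mul_le_mul_of_nonneg_left h2mr hnn
      _ = 2*A*M*r*(m:ℝ) * (r * r⁻¹) := by rw [div_eq_mul_inv]; ring
      _ = 2*A*M*r*(m:ℝ) := by rw [mul_inv_cancel₀ hrpos.ne', mul_one]
  -- tail part
  have htailb : (∑' k, b (k+m)) ≤ 32*M*r*((m:ℝ)+1) := by
    have hterm : ∀ k : ℕ,
        b (k+m) ≤ (4*M*(1/2:ℝ)^m*((m:ℝ)+1)) * (((k:ℝ)+1)*(1/2:ℝ)^k) := by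
      intro k
      rw [hb]; simp only
      rw [if_neg (by omega)]
      have hcast : (((k+m:ℕ)):ℝ) = (k:ℝ)+(m:ℝ) := by push_cast; ring
      have hfac : ((k:ℝ)+(m:ℝ)+1) ≤ ((k:ℝ)+1)*((m:ℝ)+1) := by
        have hk0 : (0:ℝ) ≤ (k:ℝ) := Nat.cast_nonneg k
        have hm0 : (0:ℝ) ≤ (m:ℝ) := Nat.cast_nonneg m
        nlinarith
      have hpow : ((1:ℝ)/2)^(k+m) = (1/2:ℝ)^k * (1/2:ℝ)^m := pow_add _ _ _
      have hpos : (0:ℝ) ≤ 4*M*((1/2:ℝ)^k*(1/2:ℝ)^m) := by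
        apply mul_nonneg (mul_nonneg (by norm_num) hM) (by positivity)
      calc 4*M*(1/2:ℝ)^(k+m)*(((k+m:ℕ):ℝ)+1)
          = (4*M*((1/2:ℝ)^k*(1/2:ℝ)^m)) * ((k:ℝ)+(m:ℝ)+1) := by
            rw [hpow, hcast]
        _ ≤ (4*M*((1/2:ℝ)^k*(1/2:ℝ)^m)) * (((k:ℝ)+1)*((m:ℝ)+1)) :=
            mul_le_mul_of_nonneg_left hfac hpos
        _ = (4*M*(1/2:ℝ)^m*((m:ℝ)+1)) * (((k:ℝ)+1)*(1/2:ℝ)^k) := by ring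
    have hsl : Summable (fun k => b (k+m)) := (summable_nat_add_iff m).mpr hsb
    have hsr : Summable (fun k : ℕ =>
        (4*M*(1/2:ℝ)^m*((m:ℝ)+1)) * (((k:ℝ)+1)*(1/2:ℝ)^k)) :=
      auxSummable.mul_left _
    have hcnn : (0:ℝ) ≤ 4*M*(1/2:ℝ)^m*((m:ℝ)+1) := by
      apply mul_nonneg (mul_nonneg (mul_nonneg (by norm_num) hM) (by positivity)) (by positivity)
    have h32 : (0:ℝ) ≤ 32*M*((m:ℝ)+1) := by
      apply mul_nonneg (mul_nonneg (by norm_num) hM) (by positivity)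
    calc (∑' k, b (k+m))
        ≤ ∑' k : ℕ, (4*M*(1/2:ℝ)^m*((m:ℝ)+1)) * (((k:ℝ)+1)*(1/2:ℝ)^k) :=
          Summable.tsum_le_tsum hterm hsl hsr
      _ = (4*M*(1/2:ℝ)^m*((m:ℝ)+1)) * ∑' k : ℕ, ((k:ℝ)+1)*(1/2:ℝ)^k := tsum_mul_left
      _ ≤ (4*M*(1/2:ℝ)^m*((m:ℝ)+1)) * 8 := mul_le_mul_of_nonneg_left auxTsumLe hcnn
      _ = (32*M*((m:ℝ)+1)) * (1/2:ℝ)^m := by ring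
      _ ≤ (32*M*((m:ℝ)+1)) * r := mul_le_mul_of_nonneg_left hrm h32
      _ = 32*M*r*((m:ℝ)+1) := by ring
  -- combine
  have hsplit : ∑' k, b k = ∑ k ∈ Finset.range m, b k + ∑' k, b (k+m) :=
    (Summable.sum_add_tsum_nat_add m hsb).symm
  have hAMr : (0:ℝ) ≤ 2*A*M*r := by
    apply mul_nonneg (mul_nonneg (mul_nonneg (by norm_num) hA) hM) hrpos.le
  have htotal : |u (x+y) + u (x-y) - 2 * u x| ≤ (2*A+32)*M*r*((m:ℝ)+1) := by
    have hmm : (m:ℝ) ≤ (m:ℝ)+1 := by linarith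
    have h1 : 2*A*M*r*(m:ℝ) ≤ 2*A*M*r*((m:ℝ)+1) := mul_le_mul_of_nonneg_left hmm hAMr
    calc |u (x+y) + u (x-y) - 2 * u x| ≤ ∑' k, b k := hmain
      _ = ∑ k ∈ Finset.range m, b k + ∑' k, b (k+m) := hsplit
      _ ≤ 2*A*M*r*(m:ℝ) + 32*M*r*((m:ℝ)+1) := add_le_add hfin htailb
      _ ≤ 2*A*M*r*((m:ℝ)+1) + 32*M*r*((m:ℝ)+1) := by linarith
      _ = (2*A+32)*M*r*((m:ℝ)+1) := by ring
  -- bound m+1 by the logarithm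
  have hmL : ((m:ℝ)+1) ≤ 3/Real.log 2 * L := by
    have e1 : Real.logb 2 r⁻¹ = Real.log r⁻¹ / Real.log 2 := (Real.log_div_log).symm
    have e2 : Real.log r⁻¹ ≤ L := by
      apply Real.log_le_log hrinv
      rw [one_div]; linarith
    have hn' : (n:ℝ) ≤ L / Real.log 2 := by
      calc (n:ℝ) ≤ Real.logb 2 r⁻¹ := hnle
        _ = Real.log r⁻¹ / Real.log 2 := e1
        _ ≤ L / Real.log 2 := by
            apply div_le_div_of_nonneg_right e2 hl2.le
    have hq : 1 ≤ L / Real.log 2 := (one_le_div hl2).mpr hL2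
    have e3 : 3/Real.log 2 * L = 3*(L/Real.log 2) := by ring
    have e4 : ((m:ℝ)+1) = (n:ℝ) + 2 := by rw [hm]; push_cast; ring
    rw [e3, e4]
    linarith
  have hfinal : (2*A+32)*M*r*((m:ℝ)+1) ≤ (2*A+32)*(3/Real.log 2)*M*(r*L) := by
    have h0 : (0:ℝ) ≤ (2*A+32)*M*r := by
      apply mul_nonneg (mul_nonneg (by linarith) hM) hrpos.le
    calc (2*A+32)*M*r*((m:ℝ)+1) ≤ (2*A+32)*M*r*(3/Real.log 2 * L) :=
          mul_le_mul_of_nonneg_left hmL h0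
      _ = (2*A+32)*(3/Real.log 2)*M*(r*L) := by ring
  exact le_trans htotal hfinal
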